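/- Let Ω ⊂ ℝ^n be bounded, 1 ≤ p ≤ ∞, μ a signed Radon measure on the closure of Ω, and ζ ∈ L^p(Ω). Then the positive part μ_+ (in the Jordan decomposition) is absolutely continuous with density in L^p(Ω) if and only if (μ + ζ)_+ is absolutely continuous with density in L^p(Ω); moreover ‖(μ+ζ)_+‖_{L^p} ≤ ‖μ_+‖_{L^p} + ‖ζ_+‖_{L^p}. -/

import Mathlib

open MeasureTheory Set
open scoped ENNReal

section Aux

variable {α : Type*} [MeasurableSpace α]

/-- A signed measure is bounded above by (the real value of) its Jordan positive part. -/
lemma aux_apply_le_posPart (s : SignedMeasure α) {E : Set α} (hE : MeasurableSet E) :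
    s E ≤ (s.toJordanDecomposition.posPart E).toReal := by
  conv_lhs => rw [← s.toSignedMeasure_toJordanDecomposition]
  rw [JordanDecomposition.toSignedMeasure, Measure.toSignedMeasure_sub_apply hE]
  have := ENNReal.toReal_nonneg (a := s.toJordanDecomposition.negPart E)
  rw [measureReal_def, measureReal_def]
  linarith

/-- Subadditivity-type bound for the Jordan positive part of a sum. -/
lemma aux_posPart_add_le (s t : SignedMeasure α) (P Q : Measure α)
    [IsFiniteMeasure P] [IsFiniteMeasure Q]
    (hs : ∀ E, MeasurableSet E → s E ≤ (P E).toReal)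
    (ht : ∀ E, MeasurableSet E → t E ≤ (Q E).toReal) :
    (s + t).toJordanDecomposition.posPart ≤ P + Q := by
  obtain ⟨i, hi₁, hi₂, hi₃, hpos, _⟩ := (s + t).toJordanDecomposition_spec
  rw [Measure.le_iff]
  intro E hE
  rw [hpos, SignedMeasure.toMeasureOfZeroLE_apply _ hi₂ hi₁ hE,
    ← ENNReal.ofReal_eq_coe_nnreal]
  have hie : MeasurableSet (i ∩ E) := hi₁.inter hE
  calc ENNReal.ofReal ((s + t) (i ∩ E))
      ≤ ENNReal.ofReal ((P (i ∩ E)).toReal + (Q (i ∩ E)).toReal) := by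
        refine ENNReal.ofReal_le_ofReal ?_
        rw [VectorMeasure.add_apply]
        exact add_le_add (hs _ hie) (ht _ hie)
    _ = P (i ∩ E) + Q (i ∩ E) := by
        rw [ENNReal.ofReal_add ENNReal.toReal_nonneg ENNReal.toReal_nonneg,
          ENNReal.ofReal_toReal (measure_ne_top _ _),
          ENNReal.ofReal_toReal (measure_ne_top _ _)]
    _ ≤ (P + Q) E := by
        rw [Measure.add_apply]
        exact add_le_add (measure_mono inter_subset_right) (measure_mono inter_subset_right)

/-- Transfer absolute continuity, `MemLp` of the density, and a norm bound,
through a domination `m ≤ P + Q`. -/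
lemma aux_transfer {ν m P Q : Measure α} [SigmaFinite ν]
    [IsFiniteMeasure m] [IsFiniteMeasure P] [IsFiniteMeasure Q]
    (hle : m ≤ P + Q) (hP : P ≪ ν) (hQ : Q ≪ ν) {p : ℝ≥0∞}
    (hPm : MemLp (fun x => (P.rnDeriv ν x).toReal) p ν)
    (hQm : MemLp (fun x => (Q.rnDeriv ν x).toReal) p ν) :
    (m ≪ ν ∧ MemLp (fun x => (m.rnDeriv ν x).toReal) p ν) ∧
      (1 ≤ p → eLpNorm (fun x => (m.rnDeriv ν x).toReal) p ν ≤
        eLpNorm (fun x => (P.rnDeriv ν x).toReal) p ν +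
          eLpNorm (fun x => (Q.rnDeriv ν x).toReal) p ν) := by
  have hPQ : (P + Q) ≪ ν := by
    intro u hu
    rw [Measure.add_apply, hP hu, hQ hu, add_zero]
  have hmac : m ≪ ν := (Measure.absolutelyContinuous_of_le hle).trans hPQ
  have hderiv : m.rnDeriv ν ≤ᵐ[ν] fun x => P.rnDeriv ν x + Q.rnDeriv ν x := by
    have h1 : m.rnDeriv ν ≤ᵐ[ν] (P + Q).rnDeriv ν := by
      refine ae_le_of_forall_setLIntegral_le_of_sigmaFinite₀
        (Measure.measurable_rnDeriv m ν).aemeasurable ?_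
      intro u hu _
      rw [Measure.setLIntegral_rnDeriv hmac, Measure.setLIntegral_rnDeriv hPQ]
      exact Measure.le_iff'.1 hle u
    have h2 := Measure.rnDeriv_add P Q ν
    filter_upwards [h1, h2] with x hx1 hx2
    exact hx1.trans_eq hx2
  have hlt1 := Measure.rnDeriv_lt_top P ν
  have hlt2 := Measure.rnDeriv_lt_top Q ν
  have hbound : ∀ᵐ x ∂ν,
      (m.rnDeriv ν x).toReal ≤ (P.rnDeriv ν x).toReal + (Q.rnDeriv ν x).toReal := by
    filter_upwards [hderiv, hlt1, hlt2] with x h h1 h2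
    rw [← ENNReal.toReal_add h1.ne h2.ne]
    exact ENNReal.toReal_mono (ENNReal.add_ne_top.2 ⟨h1.ne, h2.ne⟩) h
  have hnormb : ∀ᵐ x ∂ν, ‖(m.rnDeriv ν x).toReal‖ ≤
      ‖(P.rnDeriv ν x).toReal + (Q.rnDeriv ν x).toReal‖ := by
    filter_upwards [hbound] with x hx
    rw [Real.norm_eq_abs, Real.norm_eq_abs, abs_of_nonneg ENNReal.toReal_nonneg,
      abs_of_nonneg (by positivity)]
    exact hx
  have hmem : MemLp (fun x => (m.rnDeriv ν x).toReal) p ν :=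
    MemLp.of_le (hPm.add hQm)
      ((Measure.measurable_rnDeriv m ν).ennreal_toReal.aestronglyMeasurable) hnormb
  refine ⟨⟨hmac, hmem⟩, fun hp => ?_⟩
  calc eLpNorm (fun x => (m.rnDeriv ν x).toReal) p ν
      ≤ eLpNorm (fun x => (P.rnDeriv ν x).toReal + (Q.rnDeriv ν x).toReal) p ν :=
        eLpNorm_mono_ae hnormb
    _ ≤ _ := eLpNorm_add_le hPm.aestronglyMeasurable hQm.aestronglyMeasurable hp

/-- Properties of the measure with density `ξ⁺` on a measurable set. -/
lemma aux_density {Ω : Set α} (hΩ : MeasurableSet Ω) (ρ : Measure α) [SigmaFinite ρ]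
    {p : ℝ≥0∞} (ξ : α → ℝ) (hξ : MemLp ξ p (ρ.restrict Ω)) (hξint : Integrable ξ (ρ.restrict Ω)) :
    ((ρ.restrict Ω).withDensity fun x => ENNReal.ofReal (ξ x)) ≪ ρ ∧
    MemLp (fun x =>
      ((((ρ.restrict Ω).withDensity fun y => ENNReal.ofReal (ξ y)).rnDeriv ρ) x).toReal) p ρ ∧
    eLpNorm (fun x =>
        ((((ρ.restrict Ω).withDensity fun y => ENNReal.ofReal (ξ y)).rnDeriv ρ) x).toReal) p ρ
      = eLpNorm (fun x => max (ξ x) 0) p (ρ.restrict Ω) ∧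
    ∀ E, MeasurableSet E → ∫ x in E, ξ x ∂(ρ.restrict Ω) ≤
      (((ρ.restrict Ω).withDensity fun x => ENNReal.ofReal (ξ x)) E).toReal := by
  set D : Measure α := (ρ.restrict Ω).withDensity fun x => ENNReal.ofReal (ξ x) with hD
  have hac : D ≪ ρ :=
    (withDensity_absolutelyContinuous (ρ.restrict Ω) _).trans
      (Measure.absolutelyContinuous_of_le Measure.restrict_le_self)
  have hg : AEMeasurable (fun x => ENNReal.ofReal (ξ x)) (ρ.restrict Ω) :=
    ENNReal.measurable_ofReal.comp_aemeasurable hξ.aestronglyMeasurable.aemeasurable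
  have hind : D = ρ.withDensity (Ω.indicator fun x => ENNReal.ofReal (ξ x)) :=
    (withDensity_indicator hΩ _).symm
  have hADind : AEMeasurable (Ω.indicator fun x => ENNReal.ofReal (ξ x)) ρ :=
    (aemeasurable_indicator_iff hΩ).mpr hg
  have hrn : D.rnDeriv ρ =ᵐ[ρ] Ω.indicator fun x => ENNReal.ofReal (ξ x) := by
    rw [hind]
    exact Measure.rnDeriv_withDensity₀ ρ hADind
  have htoReal_eq : (fun x => (D.rnDeriv ρ x).toReal)
      =ᵐ[ρ] Ω.indicator fun x => max (ξ x) 0 := by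
    filter_upwards [hrn] with x hx
    rw [hx]
    by_cases h : x ∈ Ω
    · simp only [Set.indicator_of_mem h]
      exact ENNReal.toReal_ofReal' ..
    · simp [Set.indicator_of_notMem h]
  have hmaxmem : MemLp (fun x => max (ξ x) 0) p (ρ.restrict Ω) := by
    refine MemLp.of_le hξ ((hξ.aestronglyMeasurable.aemeasurable.max aemeasurable_const).aestronglyMeasurable) ?_
    refine Filter.Eventually.of_forall fun x => ?_
    rw [Real.norm_eq_abs, Real.norm_eq_abs, abs_of_nonneg (le_max_right _ _)]
    exact max_le (le_abs_self _) (abs_nonneg _)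
  have hindmem : MemLp (Ω.indicator fun x => max (ξ x) 0) p ρ :=
    (memLp_indicator_iff_restrict hΩ).mpr hmaxmem
  refine ⟨hac, hindmem.ae_eq htoReal_eq.symm, ?_, ?_⟩
  · rw [eLpNorm_congr_ae htoReal_eq, eLpNorm_indicator_eq_eLpNorm_restrict hΩ]
  · intro E hE
    rw [hD, withDensity_apply _ hE,
      integral_eq_lintegral_pos_part_sub_lintegral_neg_part (hξint.restrict (s := E))]
    exact sub_le_self _ ENNReal.toReal_nonneg

end Aux

/-- "The positive part of the signed measure `ν` is absolutely continuous with
respect to Lebesgue measure with an `L^p` Radon–Nikodym density." -/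
def posPartInLp {n : ℕ} (ν : MeasureTheory.SignedMeasure (EuclideanSpace ℝ (Fin n)))
    (p : ℝ≥0∞) : Prop :=
  ν.toJordanDecomposition.posPart ≪ (volume : Measure (EuclideanSpace ℝ (Fin n))) ∧
    MemLp (fun x => (ν.toJordanDecomposition.posPart.rnDeriv volume x).toReal) p volume

/-- Lemma A.1: for a signed Radon measure `μ` supported in the closure of a bounded
set `Ω` and `ζ ∈ L^p(Ω)`, `μ₊ ∈ L^p` iff `(μ + ζ dx)₊ ∈ L^p`, with the norm bound
`‖(μ+ζ)₊‖_{L^p} ≤ ‖μ₊‖_{L^p} + ‖ζ₊‖_{L^p}`. -/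
theorem posPart_measure_add_density {n : ℕ}
    (Ω : Set (EuclideanSpace ℝ (Fin n))) (hΩmeas : MeasurableSet Ω)
    (hΩbdd : Bornology.IsBounded Ω)
    (p : ℝ≥0∞) (hp : 1 ≤ p)
    (μ : MeasureTheory.SignedMeasure (EuclideanSpace ℝ (Fin n)))
    -- μ is carried by the closure of Ω
    (hμsupp : μ.toJordanDecomposition.posPart (closure Ω)ᶜ = 0 ∧
      μ.toJordanDecomposition.negPart (closure Ω)ᶜ = 0)
    (ζ : EuclideanSpace ℝ (Fin n) → ℝ)
    (hζ : MemLp ζ p (volume.restrict Ω))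
    (hζint : Integrable ζ (volume.restrict Ω)) :
    (posPartInLp μ p ↔ posPartInLp (μ + (volume.restrict Ω).withDensityᵥ ζ) p) ∧
    (posPartInLp μ p →
      eLpNorm (fun x =>
          (((μ + (volume.restrict Ω).withDensityᵥ ζ).toJordanDecomposition.posPart).rnDeriv
            volume x).toReal) p volume
        ≤ eLpNorm (fun x => (μ.toJordanDecomposition.posPart.rnDeriv volume x).toReal) p volume
          + eLpNorm (fun x => max (ζ x) 0) p (volume.restrict Ω)) := by
  set w := (volume.restrict Ω).withDensityᵥ ζ with hw
  set D : Measure (EuclideanSpace ℝ (Fin n)) :=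
    (volume.restrict Ω).withDensity fun x => ENNReal.ofReal (ζ x) with hDdef
  set D' : Measure (EuclideanSpace ℝ (Fin n)) :=
    (volume.restrict Ω).withDensity fun x => ENNReal.ofReal (-ζ x) with hD'def
  haveI : IsFiniteMeasure D := isFiniteMeasure_withDensity_ofReal hζint.hasFiniteIntegral
  haveI : IsFiniteMeasure D' := isFiniteMeasure_withDensity_ofReal hζint.neg.hasFiniteIntegral
  obtain ⟨hDac, hDmem, hDnorm, hDbound⟩ := aux_density hΩmeas volume ζ hζ hζint
  obtain ⟨hD'ac, hD'mem, _, hD'bound⟩ :=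
    aux_density hΩmeas volume (fun x => -ζ x) hζ.neg hζint.neg
  have hwle : ∀ E, MeasurableSet E → w E ≤ (D E).toReal := by
    intro E hE
    rw [hw, withDensityᵥ_apply hζint hE]
    exact hDbound E hE
  have hwnegle : ∀ E, MeasurableSet E → (-w) E ≤ (D' E).toReal := by
    intro E hE
    rw [VectorMeasure.neg_apply, hw, withDensityᵥ_apply hζint hE, ← integral_neg]
    exact hD'bound E hE
  have fwd : posPartInLp μ p →
      posPartInLp (μ + w) p ∧
      eLpNorm (fun x =>
          (((μ + w).toJordanDecomposition.posPart).rnDeriv volume x).toReal) p volume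
        ≤ eLpNorm (fun x => (μ.toJordanDecomposition.posPart.rnDeriv volume x).toReal) p volume
          + eLpNorm (fun x => max (ζ x) 0) p (volume.restrict Ω) := by
    intro h
    have hle : (μ + w).toJordanDecomposition.posPart ≤ μ.toJordanDecomposition.posPart + D :=
      aux_posPart_add_le μ w _ _ (fun E hE => aux_apply_le_posPart μ hE) hwle
    obtain ⟨⟨hac2, hmem2⟩, hnorm⟩ := aux_transfer hle h.1 hDac h.2 hDmem
    exact ⟨⟨hac2, hmem2⟩, hDnorm ▸ hnorm hp⟩
  have bwd : posPartInLp (μ + w) p → posPartInLp μ p := by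
    intro h
    have hμeq : μ = (μ + w) + (-w) := by abel
    have hle : μ.toJordanDecomposition.posPart ≤
        (μ + w).toJordanDecomposition.posPart + D' := by
      conv_lhs => rw [hμeq]
      exact aux_posPart_add_le (μ + w) (-w) _ _
        (fun E hE => aux_apply_le_posPart (μ + w) hE) hwnegle
    obtain ⟨⟨hac2, hmem2⟩, _⟩ := aux_transfer hle h.1 hD'ac h.2 hD'mem
    exact ⟨hac2, hmem2⟩
  exact ⟨⟨fun h => (fwd h).1, bwd⟩, fun h => (fwd h).2⟩
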